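/- Non-substitution theorem, CES case: let each of J goods be produced under constant returns with CES unit cost functions c^j(p) = (a^j₀ + ∑_{k=1}^{J} a^j_k p_k^{1−σ_j})^{1/(1−σ_j)}, where a^j₀ > 0, a^j_k > 0, and σ_j > 0 with σ_j ≠ 1 for every j. Then the system of marginal-cost-pricing equations p_j = c^j(p) for all j has at most one solution p ∈ ℝᴶ₊₊; that is, if p* ≫ 0 and p** ≫ 0 both satisfy p = c(p), then p* = p**. -/
import Mathlib

open Finset

private lemma ces_pos {J : ℕ} (e a₀ : ℝ) (ha₀ : 0 < a₀) (A : Fin J → ℝ)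
    (hA : ∀ k, 0 < A k) (q : Fin J → ℝ) (hq : ∀ k, 0 < q k) :
    0 < a₀ + ∑ k, A k * q k ^ e := by
  have : 0 ≤ ∑ k, A k * q k ^ e :=
    Finset.sum_nonneg fun k _ => le_of_lt (mul_pos (hA k) (Real.rpow_pos_of_pos (hq k) e))
  linarith

private lemma ces_mono {J : ℕ} (e a₀ : ℝ) (he : e ≠ 0) (ha₀ : 0 < a₀)
    (A : Fin J → ℝ) (hA : ∀ k, 0 < A k) (q q' : Fin J → ℝ)
    (hq : ∀ k, 0 < q k) (hq' : ∀ k, 0 < q' k) (hle : ∀ k, q k ≤ q' k) :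
    (a₀ + ∑ k, A k * q k ^ e) ^ (1/e) ≤ (a₀ + ∑ k, A k * q' k ^ e) ^ (1/e) := by
  have h1 := ces_pos (J := J) e a₀ ha₀ A hA q hq
  have h2 := ces_pos (J := J) e a₀ ha₀ A hA q' hq'
  rcases lt_or_gt_of_ne he with hneg | hpos
  · -- e < 0 : inner sum flips, outer exponent negative flips back
    have hin : ∑ k, A k * q' k ^ e ≤ ∑ k, A k * q k ^ e :=
      Finset.sum_le_sum fun k _ => by
        have := Real.rpow_le_rpow_of_nonpos (hq k) (hle k) hneg.le
        exact mul_le_mul_of_nonneg_left this (hA k).le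
    exact Real.rpow_le_rpow_of_nonpos h2 (by linarith) (one_div_neg.mpr hneg).le
  · have hin : ∑ k, A k * q k ^ e ≤ ∑ k, A k * q' k ^ e :=
      Finset.sum_le_sum fun k _ => by
        have := Real.rpow_le_rpow (hq k).le (hle k) hpos.le
        exact mul_le_mul_of_nonneg_left this (hA k).le
    exact Real.rpow_le_rpow h1.le (by linarith) (by positivity)

private lemma ces_scale {J : ℕ} (e a₀ : ℝ) (he : e ≠ 0) (ha₀ : 0 < a₀)
    (A : Fin J → ℝ) (hA : ∀ k, 0 < A k) (q : Fin J → ℝ) (hq : ∀ k, 0 < q k)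
    (t : ℝ) (ht : 1 < t) :
    (a₀ + ∑ k, A k * (t * q k) ^ e) ^ (1/e)
      < t * (a₀ + ∑ k, A k * q k ^ e) ^ (1/e) := by
  have ht0 : (0:ℝ) < t := by linarith
  have hS0 := ces_pos (J := J) e a₀ ha₀ A hA q hq
  have hte : (0:ℝ) < t ^ e := Real.rpow_pos_of_pos ht0 e
  have hsum : ∑ k, A k * (t * q k) ^ e = t ^ e * ∑ k, A k * q k ^ e := by
    rw [Finset.mul_sum]
    refine Finset.sum_congr rfl fun k _ => ?_
    rw [Real.mul_rpow ht0.le (hq k).le]; ring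
  have hfac : (t ^ e * (a₀ + ∑ k, A k * q k ^ e)) ^ (1/e)
      = t * (a₀ + ∑ k, A k * q k ^ e) ^ (1/e) := by
    rw [Real.mul_rpow hte.le hS0.le, ← Real.rpow_mul ht0.le,
      mul_one_div, div_self he, Real.rpow_one]
  rw [hsum, ← hfac]
  rcases lt_or_gt_of_ne he with hneg | hpos
  · -- e < 0 : t^e < 1, so a₀ + t^e S > t^e (a₀ + S); exponent 1/e < 0 flips
    have hte1 : t ^ e < 1 := Real.rpow_lt_one_of_one_lt_of_neg ht hneg
    have hbase : t ^ e * (a₀ + ∑ k, A k * q k ^ e)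
        < a₀ + t ^ e * ∑ k, A k * q k ^ e := by nlinarith
    have hb0 : 0 < t ^ e * (a₀ + ∑ k, A k * q k ^ e) := mul_pos hte hS0
    exact Real.rpow_lt_rpow_of_neg hb0 hbase (one_div_neg.mpr hneg)
  · have hte1 : 1 < t ^ e := Real.one_lt_rpow_iff_of_pos ht0 |>.mpr (Or.inl ⟨ht, hpos⟩)
    have hbase : a₀ + t ^ e * ∑ k, A k * q k ^ e
        < t ^ e * (a₀ + ∑ k, A k * q k ^ e) := by nlinarith
    have hSnn : 0 ≤ ∑ k, A k * q k ^ e :=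
      Finset.sum_nonneg fun k _ => le_of_lt (mul_pos (hA k) (Real.rpow_pos_of_pos (hq k) e))
    have hb0 : 0 ≤ a₀ + t ^ e * ∑ k, A k * q k ^ e := by positivity
    exact Real.rpow_lt_rpow hb0 hbase (by positivity)

private lemma ces_le {J : ℕ} (hJ : 0 < J)
    (σ : Fin J → ℝ) (hσ1 : ∀ j, σ j ≠ 1)
    (a₀ : Fin J → ℝ) (ha₀ : ∀ j, 0 < a₀ j)
    (A : Fin J → Fin J → ℝ) (hA : ∀ j k, 0 < A j k)
    (p₁ p₂ : Fin J → ℝ) (hp₁ : ∀ j, 0 < p₁ j) (hp₂ : ∀ j, 0 < p₂ j)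
    (heq₁ : ∀ j, p₁ j =
      (a₀ j + ∑ k, A j k * p₁ k ^ (1 - σ j)) ^ (1 / (1 - σ j)))
    (heq₂ : ∀ j, p₂ j =
      (a₀ j + ∑ k, A j k * p₂ k ^ (1 - σ j)) ^ (1 / (1 - σ j))) :
    ∀ j, p₁ j ≤ p₂ j := by
  by_contra h
  push_neg at h
  obtain ⟨w, hw⟩ := h
  have hne : (Finset.univ : Finset (Fin J)).Nonempty := ⟨w, Finset.mem_univ w⟩
  set t : ℝ := Finset.univ.sup' hne (fun k => p₁ k / p₂ k) with ht
  obtain ⟨j₀, -, hj₀⟩ := Finset.exists_mem_eq_sup' hne (fun k => p₁ k / p₂ k)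
  have hwle : p₁ w / p₂ w ≤ t := by
    have := Finset.le_sup' (fun k => p₁ k / p₂ k) (Finset.mem_univ w)
    rw [← ht] at this; exact this
  have ht1 : 1 < t := lt_of_lt_of_le ((one_lt_div (hp₂ w)).mpr hw) hwle
  have hub : ∀ k, p₁ k ≤ t * p₂ k := fun k => by
    have := Finset.le_sup' (fun k => p₁ k / p₂ k) (Finset.mem_univ k)
    rw [← ht] at this
    calc p₁ k = (p₁ k / p₂ k) * p₂ k := (div_mul_cancel₀ (p₁ k) (hp₂ k).ne').symm
    _ ≤ t * p₂ k := mul_le_mul_of_nonneg_right this (hp₂ k).le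
  have hj₀eq : p₁ j₀ = t * p₂ j₀ := by
    rw [ht, hj₀, div_mul_cancel₀ (p₁ j₀) (hp₂ j₀).ne']
  have he : (1 : ℝ) - σ j₀ ≠ 0 := sub_ne_zero.mpr (Ne.symm (hσ1 j₀))
  have hstep : p₁ j₀ < t * p₂ j₀ := by
    calc p₁ j₀ = (a₀ j₀ + ∑ k, A j₀ k * p₁ k ^ (1 - σ j₀)) ^ (1 / (1 - σ j₀)) := heq₁ j₀
    _ ≤ (a₀ j₀ + ∑ k, A j₀ k * (t * p₂ k) ^ (1 - σ j₀)) ^ (1 / (1 - σ j₀)) :=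
        ces_mono _ _ he (ha₀ j₀) _ (hA j₀) _ _ hp₁
          (fun k => mul_pos (by linarith) (hp₂ k)) hub
    _ < t * (a₀ j₀ + ∑ k, A j₀ k * p₂ k ^ (1 - σ j₀)) ^ (1 / (1 - σ j₀)) :=
        ces_scale _ _ he (ha₀ j₀) _ (hA j₀) _ hp₂ t ht1
    _ = t * p₂ j₀ := by rw [← heq₂ j₀]
  exact absurd hj₀eq (ne_of_lt hstep)

theorem non_substitution_theorem_ces
    (J : ℕ) (hJ : 0 < J)
    (σ : Fin J → ℝ) (hσ : ∀ j, 0 < σ j) (hσ1 : ∀ j, σ j ≠ 1)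
    (a₀ : Fin J → ℝ) (ha₀ : ∀ j, 0 < a₀ j)
    (A : Fin J → Fin J → ℝ) (hA : ∀ j k, 0 < A j k)
    (p₁ p₂ : Fin J → ℝ) (hp₁ : ∀ j, 0 < p₁ j) (hp₂ : ∀ j, 0 < p₂ j)
    (heq₁ : ∀ j, p₁ j =
      (a₀ j + ∑ k, A j k * p₁ k ^ (1 - σ j)) ^ (1 / (1 - σ j)))
    (heq₂ : ∀ j, p₂ j =
      (a₀ j + ∑ k, A j k * p₂ k ^ (1 - σ j)) ^ (1 / (1 - σ j))) :
    p₁ = p₂ := by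
  funext j
  exact le_antisymm
    (ces_le hJ σ hσ1 a₀ ha₀ A hA p₁ p₂ hp₁ hp₂ heq₁ heq₂ j)
    (ces_le hJ σ hσ1 a₀ ha₀ A hA p₂ p₁ hp₂ hp₁ heq₂ heq₁ j)
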